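/- Every block (maximal 2-connected subgraph) of a graph whose clique graph is chordal is locally connected; equivalently, if a vertex v of such a graph has disconnected open neighbourhood, then v is an articulation point. -/

import Mathlib

open SimpleGraph

/-- The clique graph of `G`: vertices are the maximal cliques of `G`,
two distinct maximal cliques being adjacent iff they intersect. -/
def cliqueGraph {V : Type*} (G : SimpleGraph V) :
    SimpleGraph {s : Set V // Maximal G.IsClique s} where
  Adj s t := s ≠ t ∧ (s.1 ∩ t.1).Nonempty
  symm := by
    refine ⟨?_⟩
    rintro s t ⟨hne, x, hx⟩
    exact ⟨hne.symm, x, hx.2, hx.1⟩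
  loopless := by refine ⟨?_⟩; rintro s ⟨hne, _⟩; exact hne rfl

/-- `f` describes a chordless (induced) cycle on `k` vertices in `G`. -/
def IsInducedCycleOn {V : Type*} (G : SimpleGraph V) {k : ℕ} (f : ZMod k → V) : Prop :=
  Function.Injective f ∧ ∀ i j : ZMod k, G.Adj (f i) (f j) ↔ (j = i + 1 ∨ i = j + 1)

/-- A graph is chordal iff it has no induced cycle of length at least `4`. -/
def IsChordal' {W : Type*} (H : SimpleGraph W) : Prop :=
  ∀ k : ℕ, 4 ≤ k → ∀ f : ZMod k → W, ¬ IsInducedCycleOn H f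

section helpers
variable {V : Type*} (G : SimpleGraph V) (v : V)

def NbrReach (a b : V) : Prop :=
  ∃ (ha : a ∈ G.neighborSet v) (hb : b ∈ G.neighborSet v),
    (G.induce (G.neighborSet v)).Reachable ⟨a, ha⟩ ⟨b, hb⟩

variable {G v}

lemma nbrReach_of_ae {a b : V} (ha : a ∈ G.neighborSet v) (hb : b ∈ G.neighborSet v)
    (h : a = b ∨ G.Adj a b) : NbrReach G v a b := by
  rcases h with rfl | h
  · exact ⟨ha, hb, Reachable.refl _⟩
  · exact ⟨ha, hb, Adj.reachable (by simpa using h)⟩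

lemma nbrReach_symm {a b : V} (h : NbrReach G v a b) : NbrReach G v b a := by
  obtain ⟨ha, hb, r⟩ := h; exact ⟨hb, ha, r.symm⟩

lemma nbrReach_trans {a b c : V} (h : NbrReach G v a b) (h' : NbrReach G v b c) :
    NbrReach G v a c := by
  obtain ⟨ha, hb, r⟩ := h; obtain ⟨hb', hc, r'⟩ := h'
  exact ⟨ha, hc, r.trans r'⟩

def GoodWalk (G : SimpleGraph V) (v : V) (n : ℕ) : Prop :=
  ∃ x : ℕ → V, (∀ k, k ≤ n → x k ≠ v) ∧ (∀ k, k < n → G.Adj (x k) (x (k+1))) ∧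
    x 0 ∈ G.neighborSet v ∧ x n ∈ G.neighborSet v ∧ ¬ NbrReach G v (x 0) (x n)

end helpers

lemma cycle_of_fn {W : Type*} (H : SimpleGraph W) (k : ℕ) (hk : 4 ≤ k) (c : ℕ → W)
    (hadj : ∀ a b, a < b → b < k → (H.Adj (c a) (c b) ↔ (b = a + 1 ∨ (a = 0 ∧ b = k - 1))))
    (hinj : ∀ a b, a < b → b < k → c a ≠ c b) :
    Function.Injective (fun i : ZMod k => c i.val) ∧
      ∀ i j : ZMod k, H.Adj (c i.val) (c j.val) ↔ (j = i + 1 ∨ i = j + 1) := by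
  haveI : NeZero k := ⟨by omega⟩
  haveI : Fact (1 < k) := ⟨by omega⟩
  have hval : ∀ i : ZMod k, i.val < k := fun i => ZMod.val_lt i
  have hvinj : ∀ i j : ZMod k, i.val = j.val → i = j := fun i j h => ZMod.val_injective k h
  have hsucc : ∀ i j : ZMod k, j = i + 1 ↔ j.val = (i.val + 1) % k := by
    intro i j
    constructor
    · rintro rfl; rw [ZMod.val_add, ZMod.val_one]
    · intro h; apply hvinj; rw [h, ZMod.val_add, ZMod.val_one]
  have hmod : ∀ m, m < k → (m + 1) % k = if m + 1 = k then 0 else m + 1 := by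
    intro m hm
    split_ifs with h
    · rw [h, Nat.mod_self]
    · exact Nat.mod_eq_of_lt (by omega)
  have hinj' : ∀ a b, a < k → b < k → c a = c b → a = b := by
    intro a b ha hb h
    rcases lt_trichotomy a b with h'|h'|h'
    · exact absurd h (hinj a b h' hb)
    · exact h'
    · exact absurd h.symm (hinj b a h' ha)
  constructor
  · intro i j h
    exact hvinj i j (hinj' i.val j.val (hval i) (hval j) h)
  · intro i j
    rw [hsucc i j, hsucc j i, hmod i.val (hval i), hmod j.val (hval j)]
    have hak : i.val < k := hval i
    have hbk : j.val < k := hval j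
    rcases lt_trichotomy i.val j.val with h'|h'|h'
    · rw [hadj i.val j.val h' hbk]
      split_ifs <;> omega
    · have hij : i = j := hvinj i j h'
      rw [hij]
      simp only [SimpleGraph.irrefl, false_iff]
      rw [← hij]
      split_ifs <;> omega
    · rw [H.adj_comm, hadj j.val i.val h' hak]
      split_ifs <;> omega

theorem stmt_14 {V : Type*} [Fintype V] (G : SimpleGraph V)
    (hconn : G.Connected) (hchordal : IsChordal' (cliqueGraph G)) :
    ∀ v : V, ¬ (G.induce (G.neighborSet v)).Connected →
      ¬ (G.induce {u : V | u ≠ v}).Connected := by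
  classical
  intro v hN hD
  -- there is a vertex different from v
  obtain ⟨u0, hu0v⟩ := hD.nonempty
  -- v has a neighbour
  have hNne : ∃ w, w ∈ G.neighborSet v := by
    obtain ⟨w⟩ := hconn.preconnected v u0
    have hl : 0 < w.length := by
      rcases Nat.eq_zero_or_pos w.length with h | h
      · exact (hu0v (SimpleGraph.Walk.eq_of_length_eq_zero h).symm).elim
      · exact h
    exact ⟨w.getVert 1, by
      have := w.adj_getVert_succ hl
      rwa [w.getVert_zero] at this⟩
  obtain ⟨w0, hw0⟩ := hNne
  -- two neighbours not reachable within the neighbourhood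
  have hpre : ¬ (G.induce (G.neighborSet v)).Preconnected := by
    intro hp
    haveI : Nonempty ↑(G.neighborSet v) := ⟨⟨w0, hw0⟩⟩
    exact hN ⟨hp⟩
  rw [SimpleGraph.Preconnected] at hpre
  push_neg at hpre
  obtain ⟨a, b, hab⟩ := hpre
  have hab' : ¬ NbrReach G v a.1 b.1 := by
    rintro ⟨ha, hb, r⟩
    exact hab r
  -- a walk in G - v from a to b
  have hav : a.1 ≠ v := fun h => G.irrefl (h ▸ a.2)
  have hbv : b.1 ≠ v := fun h => G.irrefl (h ▸ b.2)
  obtain ⟨p⟩ := hD.preconnected ⟨a.1, hav⟩ ⟨b.1, hbv⟩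
  have hGW : GoodWalk G v p.length := by
    refine ⟨fun k => (p.getVert k).1, fun k _ => (p.getVert k).2, ?_, ?_, ?_, ?_⟩
    · intro k hk
      have := p.adj_getVert_succ hk
      simpa using this
    · simpa using a.2
    · simpa [p.getVert_length] using b.2
    · simpa [p.getVert_length] using hab'
  -- minimal such walk
  have hEx : ∃ n, GoodWalk G v n := ⟨p.length, hGW⟩
  obtain ⟨n, hGood, hmin⟩ : ∃ n, GoodWalk G v n ∧ ∀ m, m < n → ¬ GoodWalk G v m :=
    ⟨Nat.find hEx, Nat.find_spec hEx, fun m hm => Nat.find_min hEx hm⟩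
  obtain ⟨x, hxv, hxadj, hx0, hxn, hxr⟩ := hGood
  -- the walk has length at least 2
  have hn2 : 2 ≤ n := by
    by_contra h
    have h01 : n = 0 ∨ n = 1 := by omega
    rcases h01 with h0 | h1
    · refine hxr (nbrReach_of_ae hx0 hxn (Or.inl ?_))
      rw [h0]
    · refine hxr (nbrReach_of_ae hx0 hxn (Or.inr ?_))
      rw [h1]
      exact hxadj 0 (by omega)
  -- interior vertices of the walk are not neighbours of v
  have hint : ∀ i, 0 < i → i < n → x i ∉ G.neighborSet v := by
    intro i hi0 hin hiN
    by_cases hr : NbrReach G v (x 0) (x i)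
    · refine hmin (n - i) (by omega) ⟨fun k => x (i + k), ?_, ?_, ?_, ?_, ?_⟩
      · intro k hk; exact hxv (i+k) (by omega)
      · intro k hk; exact hxadj (i+k) (by omega)
      · exact hiN
      · show x (i + (n - i)) ∈ G.neighborSet v
        rw [show i + (n - i) = n by omega]; exact hxn
      · show ¬ NbrReach G v (x (i + 0)) (x (i + (n - i)))
        rw [show i + (n - i) = n by omega]
        intro hr2
        exact hxr (nbrReach_trans hr hr2)
    · exact hmin i (by omega)
        ⟨x, fun k hk => hxv k (by omega), fun k hk => hxadj k (by omega), hx0, hiN, hr⟩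
  -- shortcut through a neighbour of v reachable from x 0 within the neighbourhood
  have suffixCut : ∀ u, u ∈ G.neighborSet v → NbrReach G v u (x 0) → ∀ j, 2 ≤ j → j ≤ n →
      (u = x j ∨ G.Adj u (x j)) → False := by
    intro u huN hux0 j hj2 hjn hae
    have hur : ¬ NbrReach G v u (x n) := fun h => hxr (nbrReach_trans (nbrReach_symm hux0) h)
    rcases hae with rfl | hadj
    · refine hmin (n - j) (by omega) ⟨fun k => x (j + k), ?_, ?_, ?_, ?_, ?_⟩
      · intro k hk; exact hxv (j+k) (by omega)
      · intro k hk; exact hxadj (j+k) (by omega)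
      · exact huN
      · show x (j + (n - j)) ∈ G.neighborSet v
        rw [show j + (n - j) = n by omega]; exact hxn
      · show ¬ NbrReach G v (x (j + 0)) (x (j + (n - j)))
        rw [show j + (n - j) = n by omega]
        exact hur
    · refine hmin (n - j + 1) (by omega)
        ⟨fun k => if k = 0 then u else x (j + k - 1), ?_, ?_, ?_, ?_, ?_⟩
      · intro k hk
        dsimp only
        split_ifs with h
        · exact fun hv => G.irrefl (hv ▸ huN)
        · exact hxv (j + k - 1) (by omega)
      · intro k hk
        dsimp only
        rw [if_neg (show ¬ (k + 1 = 0) by omega)]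
        by_cases h : k = 0
        · rw [if_pos h, h, show j + (0 + 1) - 1 = j by omega]
          exact hadj
        · rw [if_neg h]
          have := hxadj (j + k - 1) (by omega)
          rw [show j + k - 1 + 1 = j + (k + 1) - 1 by omega] at this
          exact this
      · show (if (0:ℕ) = 0 then u else x (j + 0 - 1)) ∈ G.neighborSet v
        rw [if_pos rfl]; exact huN
      · show (if n - j + 1 = 0 then u else x (j + (n - j + 1) - 1)) ∈ G.neighborSet v
        rw [if_neg (by omega), show j + (n - j + 1) - 1 = n by omega]; exact hxn
      · show ¬ NbrReach G v (if (0:ℕ) = 0 then u else x (j + 0 - 1))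
          (if n - j + 1 = 0 then u else x (j + (n - j + 1) - 1))
        rw [if_pos rfl, if_neg (by omega), show j + (n - j + 1) - 1 = n by omega]
        exact hur
  -- shortcut through a neighbour of v reachable from x n within the neighbourhood
  have prefixCut : ∀ u, u ∈ G.neighborSet v → NbrReach G v u (x n) → ∀ i, i + 2 ≤ n →
      (u = x i ∨ G.Adj (x i) u) → False := by
    intro u huN huxn i hi2 hae
    have hur : ¬ NbrReach G v (x 0) u := fun h => hxr (nbrReach_trans h huxn)
    rcases hae with rfl | hadj
    · exact hmin i (by omega)
        ⟨x, fun k hk => hxv k (by omega), fun k hk => hxadj k (by omega), hx0, huN, hur⟩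
    · refine hmin (i+1) (by omega)
        ⟨fun k => if k ≤ i then x k else u, ?_, ?_, ?_, ?_, ?_⟩
      · intro k hk
        dsimp only
        split_ifs with h
        · exact hxv k (by omega)
        · exact fun hv => G.irrefl (hv ▸ huN)
      · intro k hk
        dsimp only
        split_ifs with h h' h'
        · exact hxadj k (by omega)
        · have hki : k = i := by omega
          subst hki; exact hadj
        · omega
        · omega
      · show (if (0:ℕ) ≤ i then x 0 else u) ∈ G.neighborSet v
        rw [if_pos (by omega)]; exact hx0
      · show (if i + 1 ≤ i then x (i+1) else u) ∈ G.neighborSet v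
        rw [if_neg (by omega)]; exact huN
      · show ¬ NbrReach G v (if (0:ℕ) ≤ i then x 0 else u) (if i + 1 ≤ i then x (i+1) else u)
        rw [if_pos (by omega), if_neg (by omega)]
        exact hur
  -- shortcut through a common vertex in the middle
  have midCut : ∀ u, u ≠ v → ∀ i j, i + 2 ≤ j → j ≤ n →
      (i + 3 ≤ j ∨ u = x i ∨ u = x j) →
      (u = x i ∨ G.Adj (x i) u) → (u = x j ∨ G.Adj u (x j)) → False := by
    intro u huv i j hij hjn hextra hai haj
    have hch : G.Adj (x i) (x j) → False := by
      intro hadj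
      refine hmin (n - j + i + 1) (by omega)
        ⟨fun k => if k ≤ i then x k else x (k + (j - i - 1)), ?_, ?_, ?_, ?_, ?_⟩
      · intro k hk
        dsimp only
        split_ifs with h
        · exact hxv k (by omega)
        · exact hxv _ (by omega)
      · intro k hk
        dsimp only
        split_ifs with h h' h'
        · exact hxadj k (by omega)
        · have hki : k = i := by omega
          subst hki
          rw [show k + 1 + (j - k - 1) = j by omega]
          exact hadj
        · omega
        · have := hxadj (k + (j - i - 1)) (by omega)
          rw [show k + (j - i - 1) + 1 = k + 1 + (j - i - 1) by omega] at this
          exact this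
      · show (if (0:ℕ) ≤ i then x 0 else x (0 + (j - i - 1))) ∈ G.neighborSet v
        rw [if_pos (by omega)]; exact hx0
      · show (if n - j + i + 1 ≤ i then x (n - j + i + 1)
            else x (n - j + i + 1 + (j - i - 1))) ∈ G.neighborSet v
        rw [if_neg (by omega), show n - j + i + 1 + (j - i - 1) = n by omega]; exact hxn
      · show ¬ NbrReach G v (if (0:ℕ) ≤ i then x 0 else x (0 + (j - i - 1)))
            (if n - j + i + 1 ≤ i then x (n - j + i + 1) else x (n - j + i + 1 + (j - i - 1)))
        rw [if_pos (by omega), if_neg (by omega),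
          show n - j + i + 1 + (j - i - 1) = n by omega]
        exact hxr
    have heq : x i = x j → False := by
      intro hxe
      refine hmin (n - j + i) (by omega)
        ⟨fun k => if k ≤ i then x k else x (k + (j - i)), ?_, ?_, ?_, ?_, ?_⟩
      · intro k hk
        dsimp only
        split_ifs with h
        · exact hxv k (by omega)
        · exact hxv _ (by omega)
      · intro k hk
        dsimp only
        split_ifs with h h' h'
        · exact hxadj k (by omega)
        · have hki : k = i := by omega
          subst hki
          rw [show k + 1 + (j - k) = j + 1 by omega, hxe]
          exact hxadj j (by omega)
        · omega
        · have := hxadj (k + (j - i)) (by omega)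
          rw [show k + (j - i) + 1 = k + 1 + (j - i) by omega] at this
          exact this
      · show (if (0:ℕ) ≤ i then x 0 else x (0 + (j - i))) ∈ G.neighborSet v
        rw [if_pos (by omega)]; exact hx0
      · show (if n - j + i ≤ i then x (n - j + i)
            else x (n - j + i + (j - i))) ∈ G.neighborSet v
        by_cases hc : n - j + i ≤ i
        · rw [if_pos hc]
          have : n = j := by omega
          rw [show n - j + i = i by omega, hxe, ← this]; exact hxn
        · rw [if_neg hc, show n - j + i + (j - i) = n by omega]; exact hxn
      · show ¬ NbrReach G v (if (0:ℕ) ≤ i then x 0 else x (0 + (j - i)))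
            (if n - j + i ≤ i then x (n - j + i) else x (n - j + i + (j - i)))
        rw [if_pos (by omega)]
        by_cases hc : n - j + i ≤ i
        · rw [if_pos hc]
          have hnj : n = j := by omega
          rw [show n - j + i = i by omega]
          intro hr2
          refine hxr ?_
          have : x i = x n := by rw [hxe, ← hnj]
          rw [← this]; exact hr2
        · rw [if_neg hc, show n - j + i + (j - i) = n by omega]
          exact hxr
    rcases hai with he | hadi
    · rcases haj with he' | hadj
      · exact heq (by rw [← he, he'])
      · exact hch (by rw [← he]; exact hadj)
    · rcases haj with he' | hadj
      · exact hch (by rw [← he']; exact hadi)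
      · -- both adjacencies: need the longer splice, gap at least 3
        have hij3 : i + 3 ≤ j := by
          rcases hextra with h | h | h
          · exact h
          · exact (hch (by rw [← h]; exact hadj)).elim
          · exact (hch (by rw [← h]; exact hadi)).elim
        refine hmin (n - j + i + 2) (by omega)
          ⟨fun k => if k ≤ i then x k else if k = i + 1 then u
            else x (k + (j - i - 2)), ?_, ?_, ?_, ?_, ?_⟩
        · intro k hk
          dsimp only
          split_ifs with h h'
          · exact hxv k (by omega)
          · exact huv
          · exact hxv _ (by omega)
        · intro k hk
          dsimp only
          by_cases h1 : k ≤ i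
          · by_cases h2 : k + 1 ≤ i
            · rw [if_pos h1, if_pos h2]; exact hxadj k (by omega)
            · have hki : k = i := by omega
              rw [if_pos h1, if_neg h2, if_pos (show k + 1 = i + 1 by omega), hki]
              exact hadi
          · by_cases h2 : k = i + 1
            · rw [if_neg h1, if_pos h2, if_neg (by omega), if_neg (by omega),
                show k + 1 + (j - i - 2) = j by omega]
              exact hadj
            · rw [if_neg h1, if_neg h2, if_neg (by omega), if_neg (by omega)]
              have := hxadj (k + (j - i - 2)) (by omega)
              rw [show k + (j - i - 2) + 1 = k + 1 + (j - i - 2) by omega] at this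
              exact this
        · show (if (0:ℕ) ≤ i then x 0 else if (0:ℕ) = i + 1 then u
              else x (0 + (j - i - 2))) ∈ G.neighborSet v
          rw [if_pos (by omega)]; exact hx0
        · show (if n - j + i + 2 ≤ i then x (n - j + i + 2)
              else if n - j + i + 2 = i + 1 then u
              else x (n - j + i + 2 + (j - i - 2))) ∈ G.neighborSet v
          rw [if_neg (by omega), if_neg (by omega),
            show n - j + i + 2 + (j - i - 2) = n by omega]
          exact hxn
        · show ¬ NbrReach G v
              (if (0:ℕ) ≤ i then x 0 else if (0:ℕ) = i + 1 then u else x (0 + (j - i - 2)))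
              (if n - j + i + 2 ≤ i then x (n - j + i + 2)
                else if n - j + i + 2 = i + 1 then u
                else x (n - j + i + 2 + (j - i - 2)))
          rw [if_pos (by omega), if_neg (by omega), if_neg (by omega),
            show n - j + i + 2 + (j - i - 2) = n by omega]
          exact hxr
  -- no chords or repetitions on the walk
  have hchord : ∀ i j, i + 2 ≤ j → j ≤ n → ¬ (x i = x j ∨ G.Adj (x i) (x j)) := by
    intro i j hij hjn h
    refine midCut (x i) (hxv i (by omega)) i j hij hjn (Or.inr (Or.inl rfl))
      (Or.inl rfl) ?_
    rcases h with h | h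
    · exact Or.inl h
    · exact Or.inr h
  
  -- construct maximal cliques along the walk
  have hadjv0 : G.Adj v (x 0) := hx0
  have hadjvn : G.Adj v (x n) := hxn
  have hclA : G.IsClique ({v, x 0} : Set V) := isClique_pair.mpr fun _ => hadjv0
  obtain ⟨A, hAsub, hA⟩ := Finite.exists_le_maximal hclA
  have hvA : v ∈ A := hAsub (by simp)
  have h0A : x 0 ∈ A := hAsub (by simp)
  have hclB : G.IsClique ({v, x n} : Set V) := isClique_pair.mpr fun _ => hadjvn
  obtain ⟨B, hBsub, hB⟩ := Finite.exists_le_maximal hclB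
  have hvB : v ∈ B := hBsub (by simp)
  have hnB : x n ∈ B := hBsub (by simp)
  have hQex : ∀ i : ℕ, ∃ t : Set V, Maximal G.IsClique t ∧ (i < n → x i ∈ t ∧ x (i+1) ∈ t) := by
    intro i
    by_cases h : i < n
    · have hcl : G.IsClique ({x i, x (i+1)} : Set V) := isClique_pair.mpr fun _ => hxadj i h
      obtain ⟨t, hsub, ht⟩ := Finite.exists_le_maximal hcl
      exact ⟨t, ht, fun _ => ⟨hsub (by simp), hsub (by simp)⟩⟩
    · exact ⟨A, hA, fun h' => absurd h' h⟩
  choose Q hQmax hQmem using hQex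
  have haec : ∀ {s : Set V}, G.IsClique s → ∀ {a b : V}, a ∈ s → b ∈ s →
      a = b ∨ G.Adj a b := by
    intro s hs a b ha hb
    rcases eq_or_ne a b with h | h
    · exact Or.inl h
    · exact Or.inr (hs ha hb h)
  have hvQ : ∀ i, i < n → v ∉ Q i := by
    intro i hi hv
    rcases Nat.eq_zero_or_pos i with h0 | h1
    · have h1Q : x (i+1) ∈ Q i := (hQmem i hi).2
      rcases haec (hQmax i).prop hv h1Q with h | h
      · exact hxv (i+1) (by omega) h.symm
      · exact hint (i+1) (by omega) (by omega) h
    · have hiQ : x i ∈ Q i := (hQmem i hi).1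
      rcases haec (hQmax i).prop hv hiQ with h | h
      · exact hxv i (by omega) h.symm
      · exact hint i h1 hi h
  have hNA : ∀ u, u ∈ A → u ≠ v → u ∈ G.neighborSet v ∧ NbrReach G v u (x 0) := by
    intro u hu huv
    have huN : u ∈ G.neighborSet v := by
      rcases haec hA.prop hu hvA with h | h
      · exact absurd h huv
      · exact h.symm
    exact ⟨huN, nbrReach_of_ae huN hx0 (haec hA.prop hu h0A)⟩
  have hNB : ∀ u, u ∈ B → u ≠ v → u ∈ G.neighborSet v ∧ NbrReach G v u (x n) := by
    intro u hu huv
    have huN : u ∈ G.neighborSet v := by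
      rcases haec hB.prop hu hvB with h | h
      · exact absurd h huv
      · exact h.symm
    exact ⟨huN, nbrReach_of_ae huN hxn (haec hB.prop hu hnB)⟩
  -- the cyclic sequence of cliques
  let c : ℕ → {s : Set V // Maximal G.IsClique s} := fun k =>
    if k = 0 then ⟨A, hA⟩ else if k = n+1 then ⟨B, hB⟩ else ⟨Q (k-1), hQmax (k-1)⟩
  have hc0 : c 0 = ⟨A, hA⟩ := rfl
  have hcn1 : c (n+1) = ⟨B, hB⟩ := by
    show (if n+1 = 0 then (⟨A, hA⟩ : {s : Set V // Maximal G.IsClique s})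
      else if n+1 = n+1 then ⟨B, hB⟩ else ⟨Q (n+1-1), hQmax (n+1-1)⟩) = ⟨B, hB⟩
    rw [if_neg (by omega), if_pos rfl]
  have hci : ∀ i, i < n → c (i+1) = ⟨Q i, hQmax i⟩ := by
    intro i hi
    show (if i+1 = 0 then (⟨A, hA⟩ : {s : Set V // Maximal G.IsClique s})
      else if i+1 = n+1 then ⟨B, hB⟩ else ⟨Q (i+1-1), hQmax (i+1-1)⟩) = ⟨Q i, hQmax i⟩
    rw [if_neg (by omega), if_neg (by omega)]
    rfl
  -- nonconsecutive cliques in the cycle are disjoint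
  have hfar : ∀ a b, a < b → b < n+2 → ¬(b = a+1 ∨ (a = 0 ∧ b = n+1)) →
      ∀ u, u ∈ (c a).1 → u ∈ (c b).1 → False := by
    intro a b hab hb2 hnc u hua hub
    push_neg at hnc
    rcases Nat.eq_zero_or_pos a with rfl | ha1
    · rw [hc0] at hua
      have hbn : b ≠ n+1 := hnc.2 rfl
      obtain ⟨j, rfl⟩ : ∃ j, b = j + 1 := ⟨b - 1, by omega⟩
      have hj : j < n := by omega
      have hj1 : 1 ≤ j := by omega
      rw [hci j hj] at hub
      have huv : u ≠ v := fun h => hvQ j hj (h ▸ hub)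
      obtain ⟨huN, hreach⟩ := hNA u hua huv
      exact suffixCut u huN hreach (j+1) (by omega) (by omega)
        (haec (hQmax j).prop hub (hQmem j hj).2)
    · obtain ⟨i, rfl⟩ : ∃ i, a = i + 1 := ⟨a - 1, by omega⟩
      by_cases hbn : b = n + 1
      · subst hbn
        rw [hcn1] at hub
        have hi : i < n := by omega
        have hi2 : i + 2 ≤ n := by omega
        rw [hci i hi] at hua
        have huv : u ≠ v := fun h => hvQ i hi (h ▸ hua)
        obtain ⟨huN, hreach⟩ := hNB u hub huv
        have h1 : u = x i ∨ G.Adj (x i) u := by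
          rcases haec (hQmax i).prop hua (hQmem i hi).1 with h | h
          · exact Or.inl h
          · exact Or.inr h.symm
        exact prefixCut u huN hreach i hi2 h1
      · obtain ⟨j, rfl⟩ : ∃ j, b = j + 1 := ⟨b - 1, by omega⟩
        have hi : i < n := by omega
        have hj : j < n := by omega
        have hij : i + 2 ≤ j := by omega
        rw [hci i hi] at hua
        rw [hci j hj] at hub
        have huv : u ≠ v := fun h => hvQ j hj (h ▸ hub)
        have h1 : u = x i ∨ G.Adj (x i) u := by
          rcases haec (hQmax i).prop hua (hQmem i hi).1 with h | h
          · exact Or.inl h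
          · exact Or.inr h.symm
        have h2 : u = x (j+1) ∨ G.Adj u (x (j+1)) := haec (hQmax j).prop hub (hQmem j hj).2
        exact midCut u huv i (j+1) (by omega) (by omega) (Or.inl (by omega)) h1 h2
  -- consecutive cliques in the cycle are distinct and intersect
  have hnear : ∀ a b, a < b → b < n+2 → (b = a+1 ∨ (a = 0 ∧ b = n+1)) →
      (c a ≠ c b ∧ ((c a).1 ∩ (c b).1).Nonempty) := by
    intro a b hab hb2 hc'
    rcases hc' with rfl | ⟨rfl, rfl⟩
    · rcases Nat.eq_zero_or_pos a with rfl | ha1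
      · rw [hc0, show (0:ℕ)+1 = 0+1 from rfl, hci 0 (by omega)]
        constructor
        · intro h
          have hAQ : A = Q 0 := congrArg Subtype.val h
          exact hvQ 0 (by omega) (by rw [← hAQ]; exact hvA)
        · exact ⟨x 0, h0A, (hQmem 0 (by omega)).1⟩
      · obtain ⟨i, rfl⟩ : ∃ i, a = i + 1 := ⟨a - 1, by omega⟩
        by_cases hbn : i + 1 + 1 = n + 1
        · have hin : i + 1 = n := by omega
          rw [hci i (by omega), show i + 1 + 1 = n + 1 by omega, hcn1]
          constructor
          · intro h
            have hQB : Q i = B := congrArg Subtype.val h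
            exact hvQ i (by omega) (by rw [hQB]; exact hvB)
          · exact ⟨x (i+1), (hQmem i (by omega)).2, by rw [hin]; exact hnB⟩
        · have hi1 : i + 1 < n := by omega
          rw [hci i (by omega), hci (i+1) hi1]
          constructor
          · intro h
            have hQQ : Q i = Q (i+1) := congrArg Subtype.val h
            have hxiQ : x i ∈ Q (i+1) := by rw [← hQQ]; exact (hQmem i (by omega)).1
            have hxi := haec (hQmax (i+1)).prop hxiQ (hQmem (i+1) hi1).2
            exact hchord i (i+2) (by omega) (by omega) (by
              rcases hxi with h' | h'
              · exact Or.inl h'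
              · exact Or.inr h')
          · exact ⟨x (i+1), (hQmem i (by omega)).2, (hQmem (i+1) hi1).1⟩
    · rw [hc0, hcn1]
      constructor
      · intro h
        have hAB : A = B := congrArg Subtype.val h
        have h0B : x 0 ∈ B := by rw [← hAB]; exact h0A
        exact hxr (nbrReach_of_ae hx0 hxn (haec hB.prop h0B hnB))
      · exact ⟨v, hvA, hvB⟩
  have hmem : ∀ a, a < n + 2 → ∃ u, u ∈ (c a).1 := by
    intro a ha
    rcases Nat.eq_zero_or_pos a with rfl | h1
    · exact ⟨v, by rw [hc0]; exact hvA⟩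
    · by_cases hb : a = n+1
      · exact ⟨v, by rw [hb, hcn1]; exact hvB⟩
      · obtain ⟨i, rfl⟩ : ∃ i, a = i+1 := ⟨a-1, by omega⟩
        exact ⟨x i, by rw [hci i (by omega)]; exact (hQmem i (by omega)).1⟩
  have hadjlem : ∀ a b, a < b → b < n+2 →
      ((cliqueGraph G).Adj (c a) (c b) ↔ (b = a + 1 ∨ (a = 0 ∧ b = n + 2 - 1))) := by
    intro a b hab hb2
    rw [show n + 2 - 1 = n + 1 by omega]
    constructor
    · rintro ⟨hne, u, hu1, hu2⟩
      by_contra hnc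
      exact hfar a b hab hb2 hnc u hu1 hu2
    · intro h
      obtain ⟨hne, hi⟩ := hnear a b hab hb2 h
      exact ⟨hne, hi⟩
  have hinjlem : ∀ a b, a < b → b < n+2 → c a ≠ c b := by
    intro a b hab hb2
    by_cases h : (b = a + 1 ∨ (a = 0 ∧ b = n + 1))
    · exact (hnear a b hab hb2 h).1
    · intro hcc
      obtain ⟨u, hu⟩ := hmem a (by omega)
      exact hfar a b hab hb2 h u hu (hcc ▸ hu)
  obtain ⟨hinj, hadj2⟩ := cycle_of_fn (cliqueGraph G) (n+2) (by omega) c hadjlem hinjlem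
  exact hchordal (n+2) (by omega) (fun i : ZMod (n+2) => c i.val) ⟨hinj, hadj2⟩
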